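/- Let $P \subset \mathbb{R}^d$ be a normal lattice $d$-polytope with $0 \notin P$ and set $Q = \operatorname{conv}(P \cup \{0\})$. Assume $Q \cap \mathbb{Z}^d = (P \cap \mathbb{Z}^d) \cup \{0\}$. Then the following are equivalent: (a) $Q$ is normal; (b) for all $k \in \mathbb{N}$, $(kQ \setminus ((k-1)Q \cup kP)) \cap \mathbb{Z}^d = \emptyset$; (c) condition (b) holds for $k = 1, \dots, d-1$. -/

import Mathlib

open Set Pointwise

def IsLatticePt {ι : Type} (x : ι → ℝ) : Prop := ∀ i, ∃ n : ℤ, x i = n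

/-- A lattice polytope: the convex hull of a nonempty finite set of lattice points. -/
def IsLatticePolytope {ι : Type} (P : Set (ι → ℝ)) : Prop :=
  ∃ V : Set (ι → ℝ), V.Finite ∧ V.Nonempty ∧ (∀ x ∈ V, IsLatticePt x) ∧ P = convexHull ℝ V

section LatPrelim
variable {ι : Type}

lemma latpt_zero : IsLatticePt (0 : ι → ℝ) := fun i => ⟨0, by simp⟩

lemma latpt_add {x y : ι → ℝ} (hx : IsLatticePt x) (hy : IsLatticePt y) :
    IsLatticePt (x + y) := fun i => by
  obtain ⟨n, hn⟩ := hx i; obtain ⟨m, hm⟩ := hy i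
  exact ⟨n + m, by simp [hn, hm]⟩

lemma latpt_sub {x y : ι → ℝ} (hx : IsLatticePt x) (hy : IsLatticePt y) :
    IsLatticePt (x - y) := fun i => by
  obtain ⟨n, hn⟩ := hx i; obtain ⟨m, hm⟩ := hy i
  exact ⟨n - m, by simp [hn, hm]⟩

lemma latpt_sum {α : Type*} (s : Finset α) (f : α → ι → ℝ) (hf : ∀ i ∈ s, IsLatticePt (f i)) :
    IsLatticePt (∑ i ∈ s, f i) := by
  classical
  induction s using Finset.induction_on with
  | empty => simpa using latpt_zero
  | insert a s hx ih =>
      rw [Finset.sum_insert hx]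
      exact latpt_add (hf _ (Finset.mem_insert_self _ _))
        (ih fun i hi => hf i (Finset.mem_insert_of_mem hi))

end LatPrelim

section ConvPrelim
variable {E : Type*} [AddCommGroup E] [Module ℝ E] {S : Set E}

lemma comb_mem_smul {α : Type*} (hS : Convex ℝ S) (s : Finset α) (w : α → ℝ) (f : α → E)
    (hw : ∀ i ∈ s, 0 ≤ w i) (hf : ∀ i ∈ s, f i ∈ S) {r : ℝ} (hr : 0 < r)
    (hsum : ∑ i ∈ s, w i = r) : (∑ i ∈ s, w i • f i) ∈ r • S := by
  have hmem : (∑ i ∈ s, (w i / r) • f i) ∈ S := by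
    refine hS.sum_mem (fun i hi => div_nonneg (hw i hi) hr.le) ?_ hf
    rw [← Finset.sum_div, hsum, div_self hr.ne']
  refine ⟨_, hmem, ?_⟩
  show r • _ = _
  rw [Finset.smul_sum]
  refine Finset.sum_congr rfl fun i hi => ?_
  rw [smul_smul, mul_div_cancel₀ _ hr.ne']

lemma smul_set_subset_smul_set (hS : Convex ℝ S) (h0 : (0 : E) ∈ S) {s t : ℝ}
    (hs : 0 ≤ s) (hst : s ≤ t) : s • S ⊆ t • S := by
  rintro _ ⟨q, hq, rfl⟩
  rcases eq_or_lt_of_le (hs.trans hst) with h | ht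
  · have hs0 : s = 0 := le_antisymm (hst.trans h.symm.le) hs
    exact ⟨q, hq, by rw [hs0, ← h]⟩
  · refine ⟨(s / t) • q, ?_, show t • (s/t) • q = s • q by rw [smul_smul, mul_div_cancel₀ _ ht.ne']⟩
    have := hS hq h0 (a := s / t) (b := 1 - s / t) (div_nonneg hs ht.le)
      (by rw [sub_nonneg]; exact div_le_one_of_le₀ hst ht.le) (by ring)
    simpa using this

lemma comb_mem_smul_of_le {α : Type*} (hS : Convex ℝ S) (h0 : (0 : E) ∈ S)
    (s : Finset α) (w : α → ℝ) (f : α → E)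
    (hw : ∀ i ∈ s, 0 ≤ w i) (hf : ∀ i ∈ s, f i ∈ S) {r : ℝ}
    (hsum : ∑ i ∈ s, w i ≤ r) : (∑ i ∈ s, w i • f i) ∈ r • S := by
  rcases eq_or_lt_of_le (Finset.sum_nonneg hw) with h | hpos
  · have hz : ∀ i ∈ s, w i = 0 := by
      intro i hi
      exact (Finset.sum_eq_zero_iff_of_nonneg hw).1 h.symm i hi
    have : (∑ i ∈ s, w i • f i) = 0 := Finset.sum_eq_zero fun i hi => by rw [hz i hi, zero_smul]
    rw [this]
    exact ⟨0, h0, show r • (0:E) = 0 from smul_zero r⟩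
  · exact smul_set_subset_smul_set hS h0 hpos.le hsum
      (comb_mem_smul hS s w f hw hf hpos rfl)

lemma mem_add_smul (hS : Convex ℝ S) {p y : E} {b : ℝ} (hb : 0 ≤ b)
    (hp : p ∈ S) (hy : y ∈ b • S) : p + y ∈ (1 + b) • S := by
  rw [hS.add_smul zero_le_one hb]
  exact Set.add_mem_add (by simpa using hp) hy

end ConvPrelim

def IsNormal {ι : Type} (P : Set (ι → ℝ)) : Prop :=
  ∀ c : ℕ, 0 < c → ∀ x : ι → ℝ, x ∈ (c : ℝ) • P → IsLatticePt x →
    ∃ f : Fin c → (ι → ℝ), (∀ i, f i ∈ P ∧ IsLatticePt (f i)) ∧ x = ∑ i, f i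

section Main
variable {d : ℕ} {P Q : Set (Fin d → ℝ)}

lemma normal_to_b (hQc : Convex ℝ Q) (hPc : Convex ℝ P) (h0Q : (0 : Fin d → ℝ) ∈ Q)
    (hlat : ∀ z ∈ Q, IsLatticePt z → z ∈ P ∨ z = 0) (hQnm : IsNormal Q) :
    ∀ k : ℕ, 1 ≤ k → ∀ x : Fin d → ℝ, IsLatticePt x → x ∈ (k : ℝ) • Q →
      x ∈ ((k : ℝ) - 1) • Q ∨ x ∈ (k : ℝ) • P := by
  intro k hk x hxl hxQ
  obtain ⟨f, hf, hsum⟩ := hQnm k (by omega) x hxQ hxl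
  by_cases hz : ∃ i, f i = 0
  · obtain ⟨i0, hi0⟩ := hz
    left
    have hx' : x = ∑ i ∈ Finset.univ.erase i0, (1 : ℝ) • f i := by
      rw [hsum, ← Finset.add_sum_erase _ f (Finset.mem_univ i0), hi0]
      simp
    rw [hx']
    refine comb_mem_smul_of_le hQc h0Q _ _ _ (by intro i _; norm_num)
      (fun i _ => (hf i).1) ?_
    rw [Finset.sum_const, Finset.card_erase_of_mem (Finset.mem_univ i0)]
    simp only [Finset.card_univ, Fintype.card_fin, nsmul_eq_mul, mul_one]
    have : (1:ℕ) ≤ k := hk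
    push_cast [Nat.cast_sub this]
    linarith
  · right
    push_neg at hz
    have hfP : ∀ i, f i ∈ P := by
      intro i
      rcases hlat (f i) (hf i).1 (hf i).2 with h | h
      · exact h
      · exact absurd h (hz i)
    have hx' : x = ∑ i ∈ Finset.univ, (1 : ℝ) • f i := by rw [hsum]; simp
    rw [hx']
    refine comb_mem_smul hPc _ _ _ (by intro i _; norm_num) (fun i _ => hfP i)
      (by positivity) ?_
    simp

lemma b_to_normal (hPQ : P ⊆ Q) (h0Q : (0 : Fin d → ℝ) ∈ Q) (hPn : IsNormal P)
    (hb : ∀ k : ℕ, 1 ≤ k → ∀ x : Fin d → ℝ, IsLatticePt x → x ∈ (k : ℝ) • Q →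
      x ∈ ((k : ℝ) - 1) • Q ∨ x ∈ (k : ℝ) • P) :
    IsNormal Q := by
  intro c
  induction c with
  | zero => omega
  | succ n ih =>
      intro _ x hxQ hxl
      rcases hb (n + 1) (by omega) x hxl hxQ with hx1 | hx2
      · rcases Nat.eq_zero_or_pos n with rfl | hn
        · have hx0 : x = 0 := by
            rcases hx1 with ⟨q, _, hq⟩
            rw [← hq]
            norm_num
          exact ⟨fun _ => 0, fun i => ⟨h0Q, latpt_zero⟩, by simp [hx0]⟩
        · have hcast : ((n + 1 : ℕ) : ℝ) - 1 = ((n : ℕ) : ℝ) := by push_cast; ring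
          rw [hcast] at hx1
          obtain ⟨f, hf, hsum⟩ := ih hn x hx1 hxl
          refine ⟨Fin.snoc f 0, ?_, ?_⟩
          · intro i
            refine Fin.lastCases ?_ (fun j => ?_) i
            · simpa using ⟨h0Q, latpt_zero⟩
            · simpa using hf j
          · rw [Fin.sum_univ_castSucc]
            simp [hsum]
      · obtain ⟨f, hf, hsum⟩ := hPn (n + 1) (by omega) x hx2 hxl
        exact ⟨f, fun i => ⟨hPQ (hf i).1, (hf i).2⟩, hsum⟩


/-- Terminal case of the descent: some coefficient is at least 1. -/
lemma descent_terminal (hd : 1 ≤ d)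
    (hQc : Convex ℝ Q) (hPc : Convex ℝ P) (h0Q : (0 : Fin d → ℝ) ∈ Q) (hPQ : P ⊆ Q)
    (hlat : ∀ z ∈ Q, IsLatticePt z → z ∈ P ∨ z = 0)
    (hc : ∀ k : ℕ, 1 ≤ k → k ≤ d - 1 → ∀ x : Fin d → ℝ, IsLatticePt x → x ∈ (k : ℝ) • Q →
        x ∈ ((k : ℝ) - 1) • Q ∨ x ∈ (k : ℝ) • P)
    (t : Fin (d+1) → (Fin d → ℝ)) (ht : ∀ i, t i ∈ Q ∧ IsLatticePt (t i))
    (a : Fin (d+1) → ℝ) (ha : ∀ i, 0 ≤ a i) (hsa : (∑ i, a i) = (d:ℝ))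
    (x : Fin d → ℝ) (hx : x = ∑ i, a i • t i) (hxl : IsLatticePt x)
    (j : Fin (d+1)) (hj : 1 ≤ a j) :
    x ∈ ((d : ℝ) - 1) • Q ∨ x ∈ (d : ℝ) • P := by
  classical
  set b : Fin (d+1) → ℝ := fun i => a i - if i = j then 1 else 0 with hb_def
  have hb : ∀ i, 0 ≤ b i := by
    intro i
    rcases eq_or_ne i j with rfl | h
    · have hbi : b i = a i - 1 := by simp [hb_def]
      rw [hbi]
      linarith
    · have hbi : b i = a i := by simp [hb_def, h]
      rw [hbi]
      exact ha i
  have hsb : (∑ i, b i) = (d : ℝ) - 1 := by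
    simp only [hb_def, Finset.sum_sub_distrib, hsa]
    simp
  have hx' : x - t j = ∑ i, b i • t i := by
    simp only [hb_def, sub_smul, ite_smul, one_smul, zero_smul, Finset.sum_sub_distrib, ← hx]
    simp
  have hx'Q : x - t j ∈ ((d:ℝ) - 1) • Q := by
    rw [hx']
    exact comb_mem_smul_of_le hQc h0Q _ _ _ (fun i _ => hb i) (fun i _ => (ht i).1) hsb.le
  have hx'l : IsLatticePt (x - t j) := latpt_sub hxl (ht j).2
  rcases eq_or_lt_of_le hd with hd1 | hd2
  · -- d = 1 : all b i = 0, so x = t j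
    have hb0 : ∀ i ∈ Finset.univ, b i = 0 := by
      refine (Finset.sum_eq_zero_iff_of_nonneg (fun i _ => hb i)).1 ?_
      rw [hsb, ← hd1]
      norm_num
    have hxt : x = t j := by
      have : x - t j = 0 := by
        rw [hx']
        exact Finset.sum_eq_zero fun i hi => by rw [hb0 i hi, zero_smul]
      have := sub_eq_zero.mp this
      exact this
    rcases hlat (t j) (ht j).1 (ht j).2 with htjP | htj0
    · right
      have hdr : (d:ℝ) = 1 := by rw [← hd1]; norm_num
      exact ⟨t j, htjP, show (d:ℝ) • t j = x by rw [hdr, one_smul]; exact hxt.symm⟩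
    · left
      exact ⟨0, h0Q, show ((d:ℝ)-1) • (0 : Fin d → ℝ) = x by rw [smul_zero, hxt, htj0]⟩
  · -- d ≥ 2
    have hd2' : (2:ℝ) ≤ (d:ℝ) := by exact_mod_cast hd2
    have hcast : ((d - 1 : ℕ) : ℝ) = (d:ℝ) - 1 := by
      push_cast [Nat.cast_sub hd]
      ring
    have hx'Q' : x - t j ∈ ((d - 1 : ℕ) : ℝ) • Q := by rw [hcast]; exact hx'Q
    rcases hc (d-1) (by omega) (le_refl _) (x - t j) hx'l hx'Q' with h1 | h2
    · rw [hcast] at h1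
      rcases hlat (t j) (ht j).1 (ht j).2 with htjP | htj0
      · left
        have := mem_add_smul hQc (b := (d:ℝ) - 1 - 1) (by linarith) (hPQ htjP) h1
        have heq : (1 + ((d:ℝ) - 1 - 1)) = (d:ℝ) - 1 := by ring
        rw [heq] at this
        simpa using this
      · left
        have hxx : x = x - t j := by rw [htj0, sub_zero]
        rw [hxx]
        exact smul_set_subset_smul_set hQc h0Q (by linarith) (by linarith) h1
    · rw [hcast] at h2
      rcases hlat (t j) (ht j).1 (ht j).2 with htjP | htj0
      · right
        have := mem_add_smul hPc (b := (d:ℝ) - 1) (by linarith) htjP h2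
        have heq : (1 + ((d:ℝ) - 1)) = (d:ℝ) := by ring
        rw [heq] at this
        simpa using this
      · left
        have hxx : x = x - t j := by rw [htj0, sub_zero]
        rw [hxx]
        exact Set.smul_set_mono hPQ h2

/-- The determinant descent: main engine for the `k = d` case. -/
lemma det_descent (hd : 1 ≤ d)
    (hQc : Convex ℝ Q) (hPc : Convex ℝ P) (h0Q : (0 : Fin d → ℝ) ∈ Q) (hPQ : P ⊆ Q)
    (hlat : ∀ z ∈ Q, IsLatticePt z → z ∈ P ∨ z = 0)
    (hc : ∀ k : ℕ, 1 ≤ k → k ≤ d - 1 → ∀ x : Fin d → ℝ, IsLatticePt x → x ∈ (k : ℝ) • Q →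
        x ∈ ((k : ℝ) - 1) • Q ∨ x ∈ (k : ℝ) • P) :
    ∀ n : ℕ, ∀ N : Matrix (Fin (d+1)) (Fin (d+1)) ℤ, ∀ t : Fin (d+1) → (Fin d → ℝ),
      (∀ c : Fin (d+1), ∀ r : Fin (d+1), ((N r c : ℤ) : ℝ) = (Fin.snoc (t c) 1 : Fin (d+1) → ℝ) r) →
      N.det ≠ 0 → N.det.natAbs ≤ n →
      (∀ i, t i ∈ Q ∧ IsLatticePt (t i)) →
      ∀ a : Fin (d+1) → ℝ, (∀ i, 0 ≤ a i) → (∑ i, a i) = (d:ℝ) →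
      ∀ x : Fin d → ℝ, x = ∑ i, a i • t i → IsLatticePt x →
      x ∈ ((d : ℝ) - 1) • Q ∨ x ∈ (d : ℝ) • P := by
  classical
  intro n
  induction n with
  | zero =>
      intro N t hN hdet hle
      exact absurd (Int.natAbs_eq_zero.mp (Nat.le_zero.mp hle)) hdet
  | succ m ih =>
      intro N t hN hdet hle ht a ha hsa x hx hxl
      by_cases hbig : ∃ j, 1 ≤ a j
      · obtain ⟨j, hj⟩ := hbig
        exact descent_terminal hd hQc hPc h0Q hPQ hlat hc t ht a ha hsa x hx hxl j hj
      · push_neg at hbig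
        -- all coefficients are < 1; they are in fact positive
        have hapos : ∀ i, 0 < a i := by
          intro i
          have hne : (Finset.univ.erase i).Nonempty := by
            rw [← Finset.card_pos, Finset.card_erase_of_mem (Finset.mem_univ i)]
            simp [hd]
            omega
          have hlt : ∑ i' ∈ Finset.univ.erase i, a i' < ∑ i' ∈ Finset.univ.erase i, (1:ℝ) :=
            Finset.sum_lt_sum_of_nonempty hne fun i' _ => hbig i'
          have hcard : ∑ i' ∈ Finset.univ.erase i, (1:ℝ) = (d:ℝ) := by
            rw [Finset.sum_const, Finset.card_erase_of_mem (Finset.mem_univ i)]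
            simp
          have hsplit : a i + ∑ i' ∈ Finset.univ.erase i, a i' = (d:ℝ) := by
            rw [Finset.add_sum_erase _ a (Finset.mem_univ i)]
            exact hsa
          rw [hcard] at hlt
          linarith
        set μ : Fin (d+1) → ℝ := fun i => 1 - a i with hμ_def
        have hμpos : ∀ i, 0 < μ i := fun i => by
          simp only [hμ_def]
          linarith [hbig i]
        have hμlt : ∀ i, μ i < 1 := fun i => by
          simp only [hμ_def]
          linarith [hapos i]
        have hsμ : (∑ i, μ i) = 1 := by
          simp only [hμ_def, Finset.sum_sub_distrib, hsa]
          simp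
        set y : Fin d → ℝ := (∑ i, t i) - x with hy_def
        have hy : y = ∑ i, μ i • t i := by
          rw [hy_def, hx, ← Finset.sum_sub_distrib]
          refine Finset.sum_congr rfl fun i _ => ?_
          simp only [hμ_def, sub_smul, one_smul]
        have hyl : IsLatticePt y :=
          latpt_sub (latpt_sum _ t (fun i _ => (ht i).2)) hxl
        have hyQ : y ∈ Q := by
          rw [hy]
          exact hQc.sum_mem (fun i _ => (hμpos i).le) hsμ (fun i _ => (ht i).1)
        -- pick minimizing index
        obtain ⟨j, -, hjmin⟩ := Finset.exists_min_image Finset.univ (fun i => a i / μ i)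
          ⟨0, Finset.mem_univ 0⟩
        set c0 : ℝ := a j / μ j with hc0_def
        have hc0nn : 0 ≤ c0 := div_nonneg (ha j) (hμpos j).le
        have hc0μ : c0 * μ j = a j := div_mul_cancel₀ _ (hμpos j).ne'
        -- new data
        set a' : Fin (d+1) → ℝ := fun i => if i = j then c0 else a i - c0 * μ i with ha'_def
        set t' : Fin (d+1) → (Fin d → ℝ) := Function.update t j y with ht'_def
        have ha' : ∀ i, 0 ≤ a' i := by
          intro i
          rcases eq_or_ne i j with rfl | h
          · simpa [ha'_def] using hc0nn
          · have h1 : c0 * μ i ≤ a i := by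
              calc c0 * μ i ≤ (a i / μ i) * μ i :=
                    mul_le_mul_of_nonneg_right (hjmin i (Finset.mem_univ i)) (hμpos i).le
                _ = a i := div_mul_cancel₀ _ (hμpos i).ne'
            simp only [ha'_def, if_neg h]
            linarith
        have herase_a : ∑ i ∈ Finset.univ.erase j, a i = (d:ℝ) - a j := by
          have := Finset.add_sum_erase Finset.univ a (Finset.mem_univ j)
          rw [hsa] at this
          linarith
        have herase_μ : ∑ i ∈ Finset.univ.erase j, μ i = 1 - μ j := by
          have := Finset.add_sum_erase Finset.univ μ (Finset.mem_univ j)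
          rw [hsμ] at this
          linarith
        have hsa' : (∑ i, a' i) = (d:ℝ) := by
          rw [← Finset.add_sum_erase _ a' (Finset.mem_univ j)]
          have h1 : a' j = c0 := by simp [ha'_def]
          have h2 : ∑ i ∈ Finset.univ.erase j, a' i
              = ∑ i ∈ Finset.univ.erase j, (a i - c0 * μ i) := by
            refine Finset.sum_congr rfl fun i hi => ?_
            rw [ha'_def]
            simp [(Finset.mem_erase.mp hi).1]
          rw [h1, h2, Finset.sum_sub_distrib, ← Finset.mul_sum, herase_a, herase_μ]
          have : c0 * (1 - μ j) = c0 - a j := by rw [mul_sub, mul_one, hc0μ]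
          linarith
        have hxx : x = ∑ i, a' i • t' i := by
          have hLHS : ∑ i, a' i • t' i
              = c0 • y + ∑ i ∈ Finset.univ.erase j, (a i - c0 * μ i) • t i := by
            rw [← Finset.add_sum_erase _ (fun i => a' i • t' i) (Finset.mem_univ j)]
            congr 1
            · simp [ha'_def, ht'_def]
            · refine Finset.sum_congr rfl fun i hi => ?_
              have hij : i ≠ j := (Finset.mem_erase.mp hi).1
              rw [ha'_def, ht'_def]
              simp [hij, Function.update_of_ne hij]
          have hcy : c0 • y = a j • t j + ∑ i ∈ Finset.univ.erase j, (c0 * μ i) • t i := by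
            rw [hy, Finset.smul_sum]
            simp_rw [smul_smul]
            rw [← Finset.add_sum_erase _ (fun i => (c0 * μ i) • t i) (Finset.mem_univ j), hc0μ]
          rw [hLHS, hcy, hx, ← Finset.add_sum_erase _ (fun i => a i • t i) (Finset.mem_univ j),
            add_assoc, ← Finset.sum_add_distrib]
          congr 1
          refine Finset.sum_congr rfl fun i hi => ?_
          rw [← add_smul]
          congr 1
          ring
        have ht' : ∀ i, t' i ∈ Q ∧ IsLatticePt (t' i) := by
          intro i
          rcases eq_or_ne i j with rfl | h
          · rw [ht'_def]
            simp only [Function.update_self]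
            exact ⟨hyQ, hyl⟩
          · rw [ht'_def]
            rw [Function.update_of_ne h]
            exact ht i
        -- integer coordinates of y
        set yz : Fin (d+1) → ℤ := Fin.snoc (fun s : Fin d => Classical.choose (hyl s)) 1
          with hyz_def
        have hyz : ∀ r : Fin (d+1), ((yz r : ℤ) : ℝ) = (Fin.snoc y 1 : Fin (d+1) → ℝ) r := by
          intro r
          refine Fin.lastCases ?_ (fun s => ?_) r
          · simp [hyz_def]
          · simp only [hyz_def, Fin.snoc_castSucc]
            exact (Classical.choose_spec (hyl s)).symm
        set N' : Matrix (Fin (d+1)) (Fin (d+1)) ℤ := N.updateCol j yz with hN'_def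
        -- the real matrices
        set A : Matrix (Fin (d+1)) (Fin (d+1)) ℝ := N.map (Int.castRingHom ℝ) with hA_def
        have hAentry : ∀ r c : Fin (d+1), A r c = ((N r c : ℤ) : ℝ) := by
          intro r c
          simp [hA_def]
        have hAdet : A.det = ((N.det : ℤ) : ℝ) := by
          rw [hA_def, ← RingHom.mapMatrix_apply, ← RingHom.map_det]
          simp
        have hmid : ∀ r : Fin (d+1), (∑ i, μ i * (Fin.snoc (t i) 1 : Fin (d+1) → ℝ) r) = (Fin.snoc y 1 : Fin (d+1) → ℝ) r := by
          intro r
          refine Fin.lastCases ?_ (fun s => ?_) r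
          · simp [hsμ]
          · simp only [Fin.snoc_castSucc]
            rw [hy]
            rw [Finset.sum_apply]
            simp
        have hupd : A.updateCol j (fun k => ∑ i, μ i • A k i) = N'.map (Int.castRingHom ℝ) := by
          ext r c
          rcases eq_or_ne c j with rfl | h
          · rw [Matrix.updateCol_self]
            have h1 : ∀ i, μ i • A r i = μ i * (Fin.snoc (t i) 1 : Fin (d+1) → ℝ) r := by
              intro i
              rw [hAentry, hN i r]
              simp
            simp_rw [h1]
            rw [hmid r]
            rw [hN'_def]
            simp only [Matrix.map_apply, Matrix.updateCol_self, Int.coe_castRingHom]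
            exact (hyz r).symm
          · rw [Matrix.updateCol_ne h]
            rw [hN'_def]
            simp only [Matrix.map_apply, Matrix.updateCol_ne h, Int.coe_castRingHom]
            exact hAentry r c
        have hdet' : ((N'.det : ℤ) : ℝ) = μ j * ((N.det : ℤ) : ℝ) := by
          have h1 : (N'.map (Int.castRingHom ℝ)).det = ((N'.det : ℤ) : ℝ) := by
            rw [← RingHom.mapMatrix_apply, ← RingHom.map_det]
            simp
          rw [← h1, ← hupd, Matrix.det_updateCol_sum A j μ, hAdet]
          simp
        have hdetne' : N'.det ≠ 0 := by
          intro h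
          rw [h] at hdet'
          simp only [Int.cast_zero] at hdet'
          have : ((N.det : ℤ) : ℝ) = 0 := by
            rcases mul_eq_zero.mp hdet'.symm with h' | h'
            · exact absurd h' (hμpos j).ne'
            · exact h'
          exact hdet (by exact_mod_cast this)
        have hle' : N'.det.natAbs ≤ m := by
          have hNne : (0:ℝ) < |((N.det : ℤ) : ℝ)| := by
            rw [abs_pos]
            exact_mod_cast hdet
          have h1 : |((N'.det : ℤ) : ℝ)| < |((N.det : ℤ) : ℝ)| := by
            rw [hdet', abs_mul, abs_of_pos (hμpos j)]
            exact mul_lt_of_lt_one_left hNne (hμlt j)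
          have h2 : ((N'.det.natAbs : ℕ) : ℝ) < ((N.det.natAbs : ℕ) : ℝ) := by
            rw [Nat.cast_natAbs, Nat.cast_natAbs, Int.cast_abs, Int.cast_abs]
            exact h1
          have h3 : N'.det.natAbs < N.det.natAbs := by exact_mod_cast h2
          omega
        have hN' : ∀ c : Fin (d+1), ∀ r : Fin (d+1),
            ((N' r c : ℤ) : ℝ) = (Fin.snoc (t' c) 1 : Fin (d+1) → ℝ) r := by
          intro c r
          rcases eq_or_ne c j with rfl | h
          · rw [hN'_def]
            simp only [Matrix.updateCol_self]
            rw [hyz r, ht'_def]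
            simp
          · rw [hN'_def]
            simp only [Matrix.updateCol_ne h]
            rw [hN c r, ht'_def]
            rw [Function.update_of_ne h]
        exact ih N' t' hN' hdetne' hle' ht' a' ha' hsa' x hxx hxl

/-- Reduction step: if `x - p` lies in `(k-1) Q` with `p` a lattice point of `Q`,
then goodness at level `k-1` gives goodness of `x` at level `k`. -/
lemma step_down (hQc : Convex ℝ Q) (hPc : Convex ℝ P) (h0Q : (0 : Fin d → ℝ) ∈ Q)
    (hPQ : P ⊆ Q) {k : ℕ} (hk : 1 ≤ k)
    (good : 2 ≤ k → ∀ x' : Fin d → ℝ, IsLatticePt x' → x' ∈ ((k - 1 : ℕ) : ℝ) • Q →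
      x' ∈ (((k - 1 : ℕ) : ℝ) - 1) • Q ∨ x' ∈ ((k - 1 : ℕ) : ℝ) • P)
    {x p : Fin d → ℝ} (hxp : x - p ∈ ((k : ℝ) - 1) • Q)
    (hxpl : IsLatticePt (x - p)) (hpQ : p ∈ Q) (hp : p ∈ P ∨ p = 0) :
    x ∈ ((k : ℝ) - 1) • Q ∨ x ∈ (k : ℝ) • P := by
  rcases Nat.lt_or_ge k 2 with hk1 | hk2
  · -- k = 1
    have hk1' : k = 1 := by omega
    subst hk1'
    have hxp0 : x - p = 0 := by
      obtain ⟨q, -, hq⟩ := hxp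
      rw [← hq]
      norm_num
    have hxp' : x = p := sub_eq_zero.mp hxp0
    rcases hp with hpP | hp0
    · right
      refine ⟨p, hpP, ?_⟩
      show ((1:ℕ):ℝ) • p = x
      push_cast
      rw [one_smul]
      exact hxp'.symm
    · left
      refine ⟨0, h0Q, ?_⟩
      show (((1:ℕ):ℝ) - 1) • (0 : Fin d → ℝ) = x
      rw [smul_zero, hxp', hp0]
  · have hcast : ((k - 1 : ℕ) : ℝ) = (k:ℝ) - 1 := by
      push_cast [Nat.cast_sub (by omega : 1 ≤ k)]
      ring
    have hk2' : (2:ℝ) ≤ (k:ℝ) := by exact_mod_cast hk2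
    rcases good hk2 (x - p) hxpl (by rw [hcast]; exact hxp) with h1 | h2
    · rw [hcast] at h1
      rcases hp with hpP | hp0
      · left
        have := mem_add_smul hQc (b := (k:ℝ) - 1 - 1) (by linarith) hpQ h1
        have heq : (1 + ((k:ℝ) - 1 - 1)) = (k:ℝ) - 1 := by ring
        rw [heq] at this
        simpa using this
      · left
        have hxx : x = x - p := by rw [hp0, sub_zero]
        rw [hxx]
        exact smul_set_subset_smul_set hQc h0Q (by linarith) (by linarith) h1
    · rw [hcast] at h2
      rcases hp with hpP | hp0
      · right
        have := mem_add_smul hPc (b := (k:ℝ) - 1) (by linarith) hpP h2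
        have heq : (1 + ((k:ℝ) - 1)) = (k:ℝ) := by ring
        rw [heq] at this
        simpa using this
      · left
        have hxx : x = x - p := by rw [hp0, sub_zero]
        rw [hxx]
        exact Set.smul_set_mono hPQ h2

lemma c_to_b (hd : 1 ≤ d) (V : Set (Fin d → ℝ)) (hVlat : ∀ v ∈ V, IsLatticePt v)
    (hPV : P = convexHull ℝ V) (hQV : Q = convexHull ℝ (insert 0 V))
    (hQc : Convex ℝ Q) (hPc : Convex ℝ P) (h0Q : (0 : Fin d → ℝ) ∈ Q) (hPQ : P ⊆ Q)
    (hlat : ∀ z ∈ Q, IsLatticePt z → z ∈ P ∨ z = 0)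
    (hc : ∀ k : ℕ, 1 ≤ k → k ≤ d - 1 → ∀ x : Fin d → ℝ, IsLatticePt x → x ∈ (k : ℝ) • Q →
        x ∈ ((k : ℝ) - 1) • Q ∨ x ∈ (k : ℝ) • P) :
    ∀ k : ℕ, 1 ≤ k → ∀ x : Fin d → ℝ, IsLatticePt x → x ∈ (k : ℝ) • Q →
      x ∈ ((k : ℝ) - 1) • Q ∨ x ∈ (k : ℝ) • P := by
  classical
  have hVQ : V ⊆ Q := by
    intro v hv
    exact hPQ (hPV ▸ subset_convexHull ℝ V hv)
  intro k
  induction k using Nat.strong_induction_on with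
  | _ k ihk =>
  intro hk x hxl hxQ
  by_cases hkd : k ≤ d - 1
  · exact hc k hk hkd x hxl hxQ
  · have hkd' : d ≤ k := by omega
    obtain ⟨q, hq, rfl⟩ := hxQ
    rw [hQV] at hq
    obtain ⟨ι, fint, z, w, hrange, haff, hwpos, hwsum, hcomb⟩ :=
      eq_pos_convex_span_of_mem_convexHull hq
    have hzQ : ∀ i, z i ∈ Q := by
      intro i
      have hzi : z i ∈ insert 0 V := hrange ⟨i, rfl⟩
      rcases hzi with h | h
      · rw [h]; exact h0Q
      · exact hVQ h
    have hzPor : ∀ i, z i ∈ P ∨ z i = 0 := by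
      intro i
      have hzi : z i ∈ insert 0 V := hrange ⟨i, rfl⟩
      rcases hzi with h | h
      · exact Or.inr h
      · exact Or.inl (hPV ▸ subset_convexHull ℝ V h)
    have hzl : ∀ i, IsLatticePt (z i) := by
      intro i
      have hzi : z i ∈ insert 0 V := hrange ⟨i, rfl⟩
      rcases hzi with h | h
      · rw [h]; exact latpt_zero
      · exact hVlat _ h
    set b : ι → ℝ := fun i => (k:ℝ) * w i with hb_def
    have hbpos : ∀ i, 0 < b i := fun i =>
      mul_pos (by exact_mod_cast Nat.lt_of_lt_of_le Nat.zero_lt_one hk) (hwpos i)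
    have hbsum : (∑ i, b i) = (k:ℝ) := by
      rw [hb_def, ← Finset.mul_sum, hwsum, mul_one]
    have hxb : (k:ℝ) • q = ∑ i, b i • z i := by
      rw [← hcomb, Finset.smul_sum]
      refine Finset.sum_congr rfl fun i _ => ?_
      rw [hb_def, smul_smul]
    have hcard : Fintype.card ι ≤ d + 1 := by
      have h1 := haff.card_le_finrank_succ
      have h2 : Module.finrank ℝ (vectorSpan ℝ (Set.range z)) ≤ d := by
        have := Submodule.finrank_le (vectorSpan ℝ (Set.range z))
        rwa [Module.finrank_fin_fun] at this
      omega
    by_cases hbig : ∃ i, 1 ≤ b i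
    · -- some coefficient at least 1: step down to k - 1
      obtain ⟨i0, hi0⟩ := hbig
      set b' : ι → ℝ := fun i => b i - if i = i0 then 1 else 0 with hb'_def
      have hb' : ∀ i, 0 ≤ b' i := by
        intro i
        rcases eq_or_ne i i0 with rfl | h
        · have : b' i = b i - 1 := by simp [hb'_def]
          rw [this]; linarith
        · have : b' i = b i := by simp [hb'_def, h]
          rw [this]; exact (hbpos i).le
      have hsb' : (∑ i, b' i) = (k : ℝ) - 1 := by
        simp only [hb'_def, Finset.sum_sub_distrib, hbsum]
        simp
      have hxp : (k:ℝ) • q - z i0 = ∑ i, b' i • z i := by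
        simp only [hb'_def, sub_smul, ite_smul, one_smul, zero_smul,
          Finset.sum_sub_distrib, ← hxb]
        simp
      have hxpQ : (k:ℝ) • q - z i0 ∈ ((k:ℝ) - 1) • Q := by
        rw [hxp]
        exact comb_mem_smul_of_le hQc h0Q _ _ _ (fun i _ => hb' i)
          (fun i _ => hzQ i) hsb'.le
      have hxpl : IsLatticePt ((k:ℝ) • q - z i0) := latpt_sub hxl (hzl i0)
      refine step_down hQc hPc h0Q hPQ hk (fun hk2 => ?_) hxpQ hxpl (hzQ i0) (hzPor i0)
      intro x' hx'l hx'Q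
      exact ihk (k-1) (by omega) (by omega) x' hx'l hx'Q
    · -- all coefficients < 1 : forces k = d and card ι = d + 1
      push_neg at hbig
      have hne : Nonempty ι := by
        rcases isEmpty_or_nonempty ι with h | h
        · exfalso
          rw [Finset.univ_eq_empty, Finset.sum_empty] at hbsum
          have : (1:ℝ) ≤ (k:ℝ) := by exact_mod_cast hk
          linarith
        · exact h
      have hklt : (k:ℝ) < Fintype.card ι := by
        have h1 : ∑ i, b i < ∑ _i : ι, (1:ℝ) :=
          Finset.sum_lt_sum_of_nonempty Finset.univ_nonempty fun i _ => hbig i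
        rw [hbsum] at h1
        simpa using h1
      have hkltn : k < Fintype.card ι := by exact_mod_cast hklt
      have hkd2 : d = k := by omega
      have hcard' : Fintype.card ι = d + 1 := by omega
      subst hkd2
      set e : Fin (d+1) ≃ ι := (Fintype.equivFinOfCardEq hcard').symm with he_def
      set t : Fin (d+1) → (Fin d → ℝ) := z ∘ e with ht_def
      set a : Fin (d+1) → ℝ := b ∘ e with ha_def
      have hsa : (∑ i, a i) = (d:ℝ) := by
        rw [ha_def, ← hbsum]
        exact Fintype.sum_equiv e _ _ (fun i => rfl)
      have hax : (d:ℝ) • q = ∑ i, a i • t i := by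
        rw [hxb]
        exact (Fintype.sum_equiv e _ _ (fun i => rfl)).symm
      have ht : ∀ i, t i ∈ Q ∧ IsLatticePt (t i) := fun i => ⟨hzQ (e i), hzl (e i)⟩
      -- integer matrix of the columns (t i, 1)
      set N : Matrix (Fin (d+1)) (Fin (d+1)) ℤ := Matrix.of fun r c =>
        (Fin.snoc (fun s : Fin d => Classical.choose ((ht c).2 s)) 1 : Fin (d+1) → ℤ) r
        with hN_def
      have hN : ∀ c : Fin (d+1), ∀ r : Fin (d+1),
          ((N r c : ℤ) : ℝ) = (Fin.snoc (t c) 1 : Fin (d+1) → ℝ) r := by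
        intro c r
        refine Fin.lastCases ?_ (fun s => ?_) r
        · simp [hN_def]
        · simp only [hN_def, Matrix.of_apply, Fin.snoc_castSucc]
          exact (Classical.choose_spec ((ht c).2 s)).symm
      have htaff : AffineIndependent ℝ t := haff.comp_embedding e.toEmbedding
      have hdet : N.det ≠ 0 := by
        intro h0
        have hA : (N.map (Int.castRingHom ℝ)).det = 0 := by
          rw [← RingHom.mapMatrix_apply, ← RingHom.map_det, h0]
          simp
        obtain ⟨v, hv0, hv⟩ := (Matrix.exists_mulVec_eq_zero_iff).mpr hA
        have hrow : ∀ r : Fin (d+1), (∑ c, v c * (Fin.snoc (t c) 1 : Fin (d+1) → ℝ) r) = 0 := by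
          intro r
          have h1 := congrFun hv r
          have h2 : (∑ c, ((N r c : ℤ) : ℝ) * v c) = 0 := by
            simpa [Matrix.mulVec, dotProduct, Matrix.map_apply] using h1
          rw [← h2]
          refine Finset.sum_congr rfl fun c _ => ?_
          rw [hN c r]
          ring
        have hwt0 : (∑ c, v c) = 0 := by
          have := hrow (Fin.last d)
          simpa using this
        have hcomb0 : (∑ c, v c • t c) = 0 := by
          funext s
          have := hrow (Fin.castSucc s)
          simp only [Fin.snoc_castSucc] at this
          rw [Finset.sum_apply]
          simpa using this
        have := htaff.eq_zero_of_sum_eq_zero hwt0 hcomb0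
        exact hv0 (funext fun i => this i (Finset.mem_univ i))
      exact det_descent hd hQc hPc h0Q hPQ hlat hc N.det.natAbs N t hN hdet le_rfl ht
        a (fun i => (hbpos (e i)).le) hsa ((d:ℝ) • q) hax hxl


end Main

/-- Criterion for `Q = conv(P, 0)` to be a quantum jump over the normal polytope `P`:
`Q` is normal iff `L(kQ \ ((k-1)Q ∪ kP)) = ∅` for all `k ≥ 1`, iff this holds for
`k = 1, …, d-1`. -/
theorem stmt_11 (d : ℕ) (P : Set (Fin d → ℝ))
    (hP : IsLatticePolytope P) (hPn : IsNormal P)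
    (hdim : Module.finrank ℝ (affineSpan ℝ P).direction = d)
    (h0 : (0 : Fin d → ℝ) ∉ P)
    (Q : Set (Fin d → ℝ)) (hQ : Q = convexHull ℝ (insert 0 P))
    (hQlat : {x ∈ Q | IsLatticePt x} = {x ∈ P | IsLatticePt x} ∪ {0}) :
    (IsNormal Q ↔
      (∀ k : ℕ, 1 ≤ k → ∀ x : Fin d → ℝ, IsLatticePt x → x ∈ (k : ℝ) • Q →
        x ∈ ((k : ℝ) - 1) • Q ∨ x ∈ (k : ℝ) • P)) ∧
    ((∀ k : ℕ, 1 ≤ k → ∀ x : Fin d → ℝ, IsLatticePt x → x ∈ (k : ℝ) • Q →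
        x ∈ ((k : ℝ) - 1) • Q ∨ x ∈ (k : ℝ) • P) ↔
      (∀ k : ℕ, 1 ≤ k → k ≤ d - 1 → ∀ x : Fin d → ℝ, IsLatticePt x → x ∈ (k : ℝ) • Q →
        x ∈ ((k : ℝ) - 1) • Q ∨ x ∈ (k : ℝ) • P)) := by
  obtain ⟨V, hVfin, hVne, hVlat, hPV⟩ := hP
  rcases Nat.eq_zero_or_pos d with hd0 | hd
  · -- dimension 0 is impossible: `P` would contain `0`
    exfalso
    subst hd0
    obtain ⟨v, hv⟩ := hVne
    have hvP : v ∈ P := hPV ▸ subset_convexHull ℝ V hv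
    have : v = 0 := Subsingleton.elim v 0
    exact h0 (this ▸ hvP)
  · have hPc : Convex ℝ P := hPV ▸ convex_convexHull ℝ V
    have hQc : Convex ℝ Q := hQ ▸ convex_convexHull ℝ _
    have h0Q : (0 : Fin d → ℝ) ∈ Q := by
      rw [hQ]
      exact subset_convexHull ℝ _ (Set.mem_insert _ _)
    have hPQ : P ⊆ Q := by
      rw [hQ]
      exact fun p hp => subset_convexHull ℝ _ (Set.mem_insert_of_mem _ hp)
    have hlat : ∀ z ∈ Q, IsLatticePt z → z ∈ P ∨ z = 0 := by
      intro z hzQ hzl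
      have hz : z ∈ {x ∈ P | IsLatticePt x} ∪ {0} := by
        rw [← hQlat]
        exact ⟨hzQ, hzl⟩
      rcases hz with h | h
      · exact Or.inl h.1
      · exact Or.inr h
    have hQV : Q = convexHull ℝ (insert 0 V) := by
      rw [hQ]
      apply Set.Subset.antisymm
      · apply convexHull_min
        · intro z hz
          rcases hz with rfl | hz
          · exact subset_convexHull ℝ _ (Set.mem_insert _ _)
          · rw [hPV] at hz
            exact convexHull_mono (Set.subset_insert _ _) hz
        · exact convex_convexHull ℝ _
      · apply convexHull_mono
        apply Set.insert_subset_insert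
        rw [hPV]
        exact subset_convexHull ℝ V
    refine ⟨⟨fun hN => normal_to_b hQc hPc h0Q hlat hN,
      fun hb => b_to_normal hPQ h0Q hPn hb⟩,
      ⟨fun hb k hk _ => hb k hk, fun hcc => c_to_b hd V hVlat hPV hQV hQc hPc h0Q hPQ hlat hcc⟩⟩
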